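/- Let m ≥ 2, and suppose the m-subsets of [2m] are 2-colored Red/Blue such that complementary m-sets have distinct colors. For i ∈ [2m], let R(i), B(i) be the numbers of Red and Blue m-sets containing i. Then Σ_i R(i) = Σ_i B(i), R(i) + B(i) = C(2m-1, m) for every i, and R(i) − B(i) mod 4 is the same for all i ∈ [2m]. -/

import Mathlib

open Finset

lemma aux_central_even (k : ℕ) (hk : 1 ≤ k) : 2 ∣ (2*k).choose k := by
  obtain ⟨k, rfl⟩ := Nat.exists_eq_add_of_le hk
  have h : 2*(1+k) = (2*k+1)+1 := by ring
  rw [h, Nat.add_comm 1 k, Nat.choose_succ_succ]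
  have h1 := Nat.choose_symm (n := 2*k+1) (k := k+1) (by omega)
  have h2 : 2*k+1-(k+1) = k := by omega
  rw [h2] at h1
  rw [← h1]
  omega

lemma aux_count1 {α : Type*} [DecidableEq α] [Fintype α] (a : α) (k : ℕ) :
    (univ.filter (fun A : Finset α => A.card = k + 1 ∧ a ∈ A)).card
      = (Fintype.card α - 1).choose k := by
  have : (univ.filter (fun A : Finset α => A.card = k + 1 ∧ a ∈ A)).card
      = ((univ.erase a).powersetCard k).card := by
    apply Finset.card_nbij' (fun A => A.erase a) (fun B => insert a B)
    · intro A hA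
      simp only [mem_coe, mem_filter, mem_univ, true_and] at hA
      rw [mem_coe, mem_powersetCard]
      exact ⟨erase_subset_erase a (subset_univ A), by simp [card_erase_of_mem hA.2, hA.1]⟩
    · intro B hB
      rw [mem_coe, mem_powersetCard] at hB
      have haB : a ∉ B := fun h => (mem_erase.mp (hB.1 h)).1 rfl
      simp only [mem_coe, mem_filter, mem_univ, true_and]
      exact ⟨by rw [card_insert_of_notMem haB, hB.2], mem_insert_self a B⟩
    · intro A hA
      simp only [mem_coe, mem_filter, mem_univ, true_and] at hA
      exact insert_erase hA.2
    · intro B hB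
      rw [mem_coe, mem_powersetCard] at hB
      exact erase_insert (fun h => (mem_erase.mp (hB.1 h)).1 rfl)
  rw [this, card_powersetCard, card_erase_of_mem (mem_univ a), Finset.card_univ]

lemma aux_count2 {α : Type*} [DecidableEq α] [Fintype α] {a b : α} (hab : a ≠ b) (k : ℕ) :
    (univ.filter (fun A : Finset α => A.card = k + 1 ∧ a ∈ A ∧ b ∉ A)).card
      = (Fintype.card α - 2).choose k := by
  have : (univ.filter (fun A : Finset α => A.card = k + 1 ∧ a ∈ A ∧ b ∉ A)).card
      = (((univ.erase b).erase a).powersetCard k).card := by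
    apply Finset.card_nbij' (fun A => A.erase a) (fun B => insert a B)
    · intro A hA
      simp only [mem_coe, mem_filter, mem_univ, true_and] at hA
      rw [mem_coe, mem_powersetCard]
      refine ⟨fun x hx => ?_, by simp [card_erase_of_mem hA.2.1, hA.1]⟩
      rw [mem_erase] at hx ⊢
      exact ⟨hx.1, mem_erase.mpr ⟨fun h => hA.2.2 (h ▸ hx.2), mem_univ x⟩⟩
    · intro B hB
      rw [mem_coe, mem_powersetCard] at hB
      have haB : a ∉ B := fun h => (mem_erase.mp (hB.1 h)).1 rfl
      have hbB : b ∉ insert a B := by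
        intro h
        rcases mem_insert.mp h with h | h
        · exact hab h.symm
        · exact (mem_erase.mp (mem_erase.mp (hB.1 h)).2).1 rfl
      simp only [mem_coe, mem_filter, mem_univ, true_and]
      refine ⟨by rw [card_insert_of_notMem haB, hB.2], mem_insert_self a B, hbB⟩
    · intro A hA
      simp only [mem_coe, mem_filter, mem_univ, true_and] at hA
      exact insert_erase hA.2.1
    · intro B hB
      rw [mem_coe, mem_powersetCard] at hB
      exact erase_insert (fun h => (mem_erase.mp (hB.1 h)).1 rfl)
  rw [this, card_powersetCard, card_erase_of_mem, card_erase_of_mem (mem_univ b),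
    Finset.card_univ, Nat.sub_sub]
  exact mem_erase.mpr ⟨hab, mem_univ a⟩

theorem stmt_19 (m : ℕ) (hm : 2 ≤ m) (c : Finset (Fin (2 * m)) → Bool)
    (hc : ∀ A : Finset (Fin (2 * m)), A.card = m → c Aᶜ ≠ c A)
    (R B : Fin (2 * m) → ℕ)
    (hR : ∀ i, R i = (Finset.univ.filter
      (fun A : Finset (Fin (2 * m)) => A.card = m ∧ i ∈ A ∧ c A = true)).card)
    (hB : ∀ i, B i = (Finset.univ.filter
      (fun A : Finset (Fin (2 * m)) => A.card = m ∧ i ∈ A ∧ c A = false)).card) :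
    (∑ i, R i) = (∑ i, B i) ∧
    (∀ i, R i + B i = (2 * m - 1).choose m) ∧
    (∀ i j : Fin (2 * m), ((R i : ℤ) - (B i : ℤ)) % 4 = ((R j : ℤ) - (B j : ℤ)) % 4) := by
  have hcardcompl : ∀ A : Finset (Fin (2 * m)), A.card = m → Aᶜ.card = m := by
    intro A hA
    rw [Finset.card_compl, hA, Fintype.card_fin]
    omega
  -- color of the complement
  have hcol : ∀ A : Finset (Fin (2 * m)), A.card = m → ∀ b : Bool, c A = b → c Aᶜ = !b := by
    intro A hA b hb
    have := hc A hA
    rw [hb] at this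
    cases b <;> simp_all
  -- double counting : for each color b the column sums
  have key : ∀ b : Bool, (∑ i : Fin (2*m), (univ.filter
      (fun A : Finset (Fin (2 * m)) => A.card = m ∧ i ∈ A ∧ c A = b)).card)
      = m * (univ.filter (fun A : Finset (Fin (2 * m)) => A.card = m ∧ c A = b)).card := by
    intro b
    simp only [Finset.card_filter]
    rw [Finset.sum_comm]
    have step : ∀ A : Finset (Fin (2*m)),
        (∑ i : Fin (2*m), if A.card = m ∧ i ∈ A ∧ c A = b then 1 else 0)
        = if A.card = m ∧ c A = b then m else 0 := by
      intro A
      by_cases h : A.card = m ∧ c A = b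
      · rw [if_pos h]
        simp only [h.1, h.2, true_and, and_true]
        rw [← Finset.card_filter]
        simp [Finset.filter_mem_eq_inter, ← h.1]
      · rw [if_neg h, Finset.sum_eq_zero]
        intro i _
        rw [if_neg]
        tauto
    rw [Finset.sum_congr rfl (fun A _ => step A), ← Finset.sum_filter,
      Finset.sum_const, smul_eq_mul, mul_comm, Finset.card_filter]
  -- red and blue sets are equinumerous
  have hRBcard : (univ.filter (fun A : Finset (Fin (2 * m)) => A.card = m ∧ c A = true)).card
      = (univ.filter (fun A : Finset (Fin (2 * m)) => A.card = m ∧ c A = false)).card := by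
    apply Finset.card_nbij' (fun A => Aᶜ) (fun A => Aᶜ)
    · intro A hA
      simp only [mem_coe, mem_filter, mem_univ, true_and] at hA ⊢
      exact ⟨hcardcompl A hA.1, by simpa using hcol A hA.1 true hA.2⟩
    · intro A hA
      simp only [mem_coe, mem_filter, mem_univ, true_and] at hA ⊢
      exact ⟨hcardcompl A hA.1, by simpa using hcol A hA.1 false hA.2⟩
    · intro A _; exact compl_compl A
    · intro A _; exact compl_compl A
  -- Part 1
  have part1 : (∑ i, R i) = (∑ i, B i) := by
    simp only [hR, hB]
    rw [key true, key false, hRBcard]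
  -- Part 2
  have part2 : ∀ i, R i + B i = (2 * m - 1).choose m := by
    intro i
    rw [hR i, hB i]
    have hsplit := Finset.card_filter_add_card_filter_not
      (s := univ.filter (fun A : Finset (Fin (2 * m)) => A.card = m ∧ i ∈ A))
      (p := fun A => c A = true)
    rw [Finset.filter_filter, Finset.filter_filter] at hsplit
    have e1 : univ.filter (fun A : Finset (Fin (2 * m)) => (A.card = m ∧ i ∈ A) ∧ c A = true)
        = univ.filter (fun A : Finset (Fin (2 * m)) => A.card = m ∧ i ∈ A ∧ c A = true) := by
      apply Finset.filter_congr; intro A _; tauto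
    have e2 : univ.filter (fun A : Finset (Fin (2 * m)) => (A.card = m ∧ i ∈ A) ∧ ¬ c A = true)
        = univ.filter (fun A : Finset (Fin (2 * m)) => A.card = m ∧ i ∈ A ∧ c A = false) := by
      apply Finset.filter_congr; intro A _
      simp only [Bool.not_eq_true]
      tauto
    rw [e1, e2] at hsplit
    rw [hsplit]
    -- card of the set of m-subsets containing i
    have hm1 : m = (m - 1) + 1 := by omega
    have := aux_count1 (α := Fin (2*m)) i (m - 1)
    rw [← hm1, Fintype.card_fin] at this
    rw [this]
    have := Nat.choose_symm (n := 2*m-1) (k := m) (by omega)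
    have h2 : 2*m-1-m = m-1 := by omega
    rw [h2] at this
    exact this
  refine ⟨part1, part2, ?_⟩
  -- Part 3
  intro i j
  by_cases hij : i = j
  · rw [hij]
  -- split R i according to membership of j
  have split : ∀ (x y : Fin (2*m)) (b : Bool),
      (univ.filter (fun A : Finset (Fin (2 * m)) => A.card = m ∧ x ∈ A ∧ c A = b)).card
      = (univ.filter (fun A : Finset (Fin (2 * m)) =>
          A.card = m ∧ x ∈ A ∧ y ∈ A ∧ c A = b)).card
        + (univ.filter (fun A : Finset (Fin (2 * m)) =>
          A.card = m ∧ x ∈ A ∧ y ∉ A ∧ c A = b)).card := by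
    intro x y b
    have hsplit := Finset.card_filter_add_card_filter_not
      (s := univ.filter (fun A : Finset (Fin (2 * m)) => A.card = m ∧ x ∈ A ∧ c A = b))
      (p := fun A => y ∈ A)
    rw [Finset.filter_filter, Finset.filter_filter] at hsplit
    rw [← hsplit]
    congr 1
    · exact congrArg Finset.card (Finset.filter_congr (fun A _ => by tauto))
    · exact congrArg Finset.card (Finset.filter_congr (fun A _ => by tauto))
  -- the "both i and j" counts agree after swapping i and j
  have eboth : (univ.filter (fun A : Finset (Fin (2 * m)) =>
        A.card = m ∧ i ∈ A ∧ j ∈ A ∧ c A = true)).card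
      = (univ.filter (fun A : Finset (Fin (2 * m)) =>
        A.card = m ∧ j ∈ A ∧ i ∈ A ∧ c A = true)).card := by
    congr 1
    apply Finset.filter_congr; intro A _; tauto
  -- complement bijection : red sets with j, without i  ↔  blue sets with i, without j
  have ecompl : (univ.filter (fun A : Finset (Fin (2 * m)) =>
        A.card = m ∧ j ∈ A ∧ i ∉ A ∧ c A = true)).card
      = (univ.filter (fun A : Finset (Fin (2 * m)) =>
        A.card = m ∧ i ∈ A ∧ j ∉ A ∧ c A = false)).card := by
    apply Finset.card_nbij' (fun A => Aᶜ) (fun A => Aᶜ)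
    · intro A hA
      simp only [mem_coe, mem_filter, mem_univ, true_and] at hA ⊢
      refine ⟨hcardcompl A hA.1, by simp [hA.2.2.1], by simp [hA.2.1],
        by simpa using hcol A hA.1 true hA.2.2.2⟩
    · intro A hA
      simp only [mem_coe, mem_filter, mem_univ, true_and] at hA ⊢
      refine ⟨hcardcompl A hA.1, by simp [hA.2.2.1], by simp [hA.2.1],
        by simpa using hcol A hA.1 false hA.2.2.2⟩
    · intro A _; exact compl_compl A
    · intro A _; exact compl_compl A
  -- color split of the sets containing i but not j
  have hsplitT := Finset.card_filter_add_card_filter_not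
    (s := univ.filter (fun A : Finset (Fin (2 * m)) => A.card = m ∧ i ∈ A ∧ j ∉ A))
    (p := fun A => c A = true)
  rw [Finset.filter_filter, Finset.filter_filter] at hsplitT
  have f1 : univ.filter (fun A : Finset (Fin (2 * m)) =>
        (A.card = m ∧ i ∈ A ∧ j ∉ A) ∧ c A = true)
      = univ.filter (fun A : Finset (Fin (2 * m)) =>
        A.card = m ∧ i ∈ A ∧ j ∉ A ∧ c A = true) := by
    apply Finset.filter_congr; intro A _; tauto
  have f2 : univ.filter (fun A : Finset (Fin (2 * m)) =>
        (A.card = m ∧ i ∈ A ∧ j ∉ A) ∧ ¬ c A = true)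
      = univ.filter (fun A : Finset (Fin (2 * m)) =>
        A.card = m ∧ i ∈ A ∧ j ∉ A ∧ c A = false) := by
    apply Finset.filter_congr; intro A _
    simp only [Bool.not_eq_true]
    tauto
  rw [f1, f2] at hsplitT
  -- the number of m-sets containing i but not j is even
  have hTeven : 2 ∣ (univ.filter
      (fun A : Finset (Fin (2 * m)) => A.card = m ∧ i ∈ A ∧ j ∉ A)).card := by
    have hm1 : m = (m - 1) + 1 := by omega
    have := aux_count2 (α := Fin (2*m)) hij (m - 1)
    rw [← hm1, Fintype.card_fin] at this
    rw [this]
    have h2 : 2*m-2 = 2*(m-1) := by omega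
    rw [h2]
    exact aux_central_even (m-1) (by omega)
  -- put everything together
  have h1 := part2 i
  have h2 := part2 j
  have hRi := hR i
  have hRj := hR j
  rw [split i j true] at hRi
  rw [split j i true, ← eboth, ecompl] at hRj
  obtain ⟨t, ht⟩ := hTeven
  omega
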